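/- Consider the augmented target distribution q̂ = [qᵀ, 1 − m/n]ᵀ ∈ ℝ^{m+1} with q = (1/n)·1_m, p = (1/n)·1_n, augmented feature cost M̂ = [M, 0_n], and augmented tensor L̂ that vanishes whenever an index equals m+1. Then the map sending T̂ ∈ 𝒯(p, q̂) to its first m columns T is a bijection onto 𝒯_{m/n}(p, q) ∩ {T : Tᵀ1 = q}, and it preserves the objective: (1−α)⟨T̂, M̂⟩ + α⟨L̂ ⊗ T̂, T̂⟩ = (1−α)⟨T, M⟩ + α⟨L ⊗ T, T⟩. Consequently, the minimum of the fused Gromov-Wasserstein objective over 𝒯(p, q̂) equals the minimum of the partial fused Gromov-Wasserstein objective over 𝒯_{m/n}(p, q). -/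

import Mathlib

open scoped BigOperators

/-- Column restriction: keep the first m columns. -/
def restrictCols (n m : ℕ) (That : Matrix (Fin n) (Fin (m + 1)) ℝ) :
    Matrix (Fin n) (Fin m) ℝ := fun i j => That i j.castSucc

/-- The classical transport polytope 𝒯(p, q̂) with p = (1/n)1 and q̂ = [(1/n)1ᵀ, 1 − m/n]ᵀ. -/
def TpolyHat (n m : ℕ) : Set (Matrix (Fin n) (Fin (m + 1)) ℝ) :=
  {That | (∀ i j, 0 ≤ That i j) ∧ (∀ i, ∑ j, That i j = 1 / (n : ℝ)) ∧
    (∀ j, ∑ i, That i j = (Fin.snoc (fun _ : Fin m => 1 / (n : ℝ)) (1 - (m : ℝ) / (n : ℝ)) : Fin (m + 1) → ℝ) j)}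

/-- The partial transport set 𝒯_{m/n}(p, q) with p = (1/n)1_n, q = (1/n)1_m. -/
def Tpartial (n m : ℕ) : Set (Matrix (Fin n) (Fin m) ℝ) :=
  {T | (∀ i j, 0 ≤ T i j) ∧ (∀ i, ∑ j, T i j ≤ 1 / (n : ℝ)) ∧
    (∀ j, ∑ i, T i j ≤ 1 / (n : ℝ)) ∧ ∑ i, ∑ j, T i j = (m : ℝ) / (n : ℝ)}

/-- Augmented feature cost M̂ = [M, 0]. -/
def Mhat (n m : ℕ) (M : Matrix (Fin n) (Fin m) ℝ) : Matrix (Fin n) (Fin (m + 1)) ℝ :=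
  fun i => Fin.snoc (M i) 0

/-- Augmented structure tensor L̂ vanishing whenever a query index is the dummy node. -/
def Lhat (n m : ℕ) (L : Fin n → Fin n → Fin m → Fin m → ℝ) :
    Fin n → Fin n → Fin (m + 1) → Fin (m + 1) → ℝ :=
  fun i i' j j' =>
    if h : (j : ℕ) < m ∧ (j' : ℕ) < m then L i i' ⟨j, h.1⟩ ⟨j', h.2⟩ else 0

/-- Fused Gromov-Wasserstein objective on the augmented problem. -/
def objHat (n m : ℕ) (α : ℝ) (M : Matrix (Fin n) (Fin m) ℝ)
    (L : Fin n → Fin n → Fin m → Fin m → ℝ)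
    (That : Matrix (Fin n) (Fin (m + 1)) ℝ) : ℝ :=
  (1 - α) * (∑ i, ∑ j, That i j * Mhat n m M i j)
    + α * ∑ i, ∑ i', ∑ j, ∑ j', Lhat n m L i i' j j' * That i j * That i' j'

/-- Partial fused Gromov-Wasserstein objective. -/
def objPart (n m : ℕ) (α : ℝ) (M : Matrix (Fin n) (Fin m) ℝ)
    (L : Fin n → Fin n → Fin m → Fin m → ℝ)
    (T : Matrix (Fin n) (Fin m) ℝ) : ℝ :=
  (1 - α) * (∑ i, ∑ j, T i j * M i j)
    + α * ∑ i, ∑ i', ∑ j, ∑ j', L i i' j j' * T i j * T i' j'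


lemma colsum_eq (n m : ℕ) (T : Matrix (Fin n) (Fin m) ℝ) (hT : T ∈ Tpartial n m) :
    ∀ j, ∑ i, T i j = 1 / (n : ℝ) := by
  have hle := hT.2.2.1
  have htot : ∑ j, ∑ i, T i j = ∑ _j : Fin m, (1 / (n : ℝ)) := by
    rw [Finset.sum_comm, hT.2.2.2]
    simp [div_eq_mul_inv, Finset.sum_const, mul_comm]
  have := (Finset.sum_eq_sum_iff_of_le (fun j _ => hle j)).mp htot
  exact fun j => this j (Finset.mem_univ j)

lemma obj_pres (n m : ℕ) (α : ℝ) (M : Matrix (Fin n) (Fin m) ℝ)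
    (L : Fin n → Fin n → Fin m → Fin m → ℝ) (That : Matrix (Fin n) (Fin (m + 1)) ℝ) :
    objHat n m α M L That = objPart n m α M L (restrictCols n m That) := by
  unfold objHat objPart
  have h1 : ∀ i, ∑ j, That i j * Mhat n m M i j
      = ∑ j, restrictCols n m That i j * M i j := by
    intro i
    rw [Fin.sum_univ_castSucc]
    simp [Mhat, restrictCols]
  have h2 : ∀ i i', ∑ j, ∑ j', Lhat n m L i i' j j' * That i j * That i' j'
      = ∑ j, ∑ j', L i i' j j' * restrictCols n m That i j
          * restrictCols n m That i' j' := by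
    intro i i'
    rw [Fin.sum_univ_castSucc]
    have hlast : ∑ j', Lhat n m L i i' (Fin.last m) j' * That i (Fin.last m) * That i' j' = 0 := by
      apply Finset.sum_eq_zero
      intro j' _
      simp [Lhat]
    rw [hlast, add_zero]
    refine Finset.sum_congr rfl fun j _ => ?_
    rw [Fin.sum_univ_castSucc]
    have hlast2 : Lhat n m L i i' j.castSucc (Fin.last m) * That i j.castSucc
        * That i' (Fin.last m) = 0 := by
      simp [Lhat]
    rw [hlast2, add_zero]
    refine Finset.sum_congr rfl fun j' _ => ?_
    have : Lhat n m L i i' j.castSucc j'.castSucc = L i i' j j' := by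
      simp [Lhat, Fin.is_lt]
    rw [this]
    rfl
  rw [Finset.sum_congr rfl fun i _ => h1 i,
    Finset.sum_congr rfl fun i _ => Finset.sum_congr rfl fun i' _ => h2 i i']

lemma maps_to_aux (n m : ℕ) (That : Matrix (Fin n) (Fin (m + 1)) ℝ)
    (h : That ∈ TpolyHat n m) :
    restrictCols n m That ∈ Tpartial n m ∧
      ∀ j, ∑ i, restrictCols n m That i j = 1 / (n : ℝ) := by
  obtain ⟨hpos, hrow, hcol⟩ := h
  have hcol' : ∀ j : Fin m, ∑ i, restrictCols n m That i j = 1 / (n : ℝ) := by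
    intro j
    have := hcol j.castSucc
    simpa [restrictCols, Fin.snoc_castSucc] using this
  have hrow' : ∀ i, ∑ j, restrictCols n m That i j ≤ 1 / (n : ℝ) := by
    intro i
    have := hrow i
    rw [Fin.sum_univ_castSucc] at this
    have hlast := hpos i (Fin.last m)
    simp only [restrictCols]
    linarith
  refine ⟨⟨fun i j => hpos i j.castSucc, hrow', fun j => le_of_eq (hcol' j), ?_⟩, hcol'⟩
  rw [show ∑ i, ∑ j, restrictCols n m That i j = ∑ j, ∑ i, restrictCols n m That i j from Finset.sum_comm]
  rw [Finset.sum_congr rfl fun j _ => hcol' j]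
  simp [div_eq_mul_inv, Finset.sum_const, mul_comm]

/-- restriction to the first m columns is a bijection from 𝒯(p, q̂) onto
𝒯_{m/n}(p,q) ∩ {Tᵀ1 = q}, preserves the objective, and consequently the minima of the
augmented and partial fused Gromov-Wasserstein problems coincide. -/
theorem stmt_8 (n m : ℕ) (hm : 0 < m) (hmn : m < n)
    (α : ℝ) (hα : α ∈ Set.Icc (0 : ℝ) 1)
    (M : Matrix (Fin n) (Fin m) ℝ)
    (L : Fin n → Fin n → Fin m → Fin m → ℝ) :
    Set.BijOn (restrictCols n m) (TpolyHat n m)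
      {T | T ∈ Tpartial n m ∧ ∀ j, ∑ i, T i j = 1 / (n : ℝ)} ∧
    (∀ That ∈ TpolyHat n m,
      objHat n m α M L That = objPart n m α M L (restrictCols n m That)) ∧
    sInf (objHat n m α M L '' TpolyHat n m) = sInf (objPart n m α M L '' Tpartial n m) := by
  have hn : (0 : ℝ) < (n : ℝ) := by
    have : 0 < n := lt_of_le_of_lt (Nat.zero_le m) hmn
    exact_mod_cast this
  have hsurj : ∀ T ∈ {T | T ∈ Tpartial n m ∧ ∀ j, ∑ i, T i j = 1 / (n : ℝ)},
      ∃ That ∈ TpolyHat n m, restrictCols n m That = T := by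
    rintro T ⟨⟨hpos, hrow, hcolle, htot⟩, hcol⟩
    refine ⟨fun i => Fin.snoc (T i) (1 / (n : ℝ) - ∑ j, T i j), ⟨?_, ?_, ?_⟩, ?_⟩
    · intro i j
      induction j using Fin.lastCases with
      | last => simpa [Fin.snoc_last] using sub_nonneg.mpr (hrow i)
      | cast j => simpa [Fin.snoc_castSucc] using hpos i j
    · intro i
      rw [Fin.sum_univ_castSucc]
      simp [Fin.snoc_castSucc, Fin.snoc_last]
    · intro j
      induction j using Fin.lastCases with
      | cast j =>
        simp only [Fin.snoc_castSucc]
        exact hcol j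
      | last =>
        simp only [Fin.snoc_last]
        rw [Finset.sum_sub_distrib, show ∑ x, ∑ j, T x j = ∑ j, ∑ x, T x j from Finset.sum_comm]
        rw [Finset.sum_congr rfl fun j _ => hcol j]
        simp only [Finset.sum_const, Finset.card_univ, Fintype.card_fin, nsmul_eq_mul]
        field_simp
    · funext i j
      simp [restrictCols, Fin.snoc_castSucc]
  constructor
  · refine ⟨fun That h => maps_to_aux n m That h, ?_, ?_⟩
    · intro A hA B hB hAB
      funext i j
      induction j using Fin.lastCases with
      | cast j => exact congrFun (congrFun hAB i) j
      | last =>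
        have hA2 := hA.2.1 i
        have hB2 := hB.2.1 i
        rw [Fin.sum_univ_castSucc] at hA2 hB2
        have h3 : ∑ j : Fin m, A i j.castSucc = ∑ j : Fin m, B i j.castSucc := by
          refine Finset.sum_congr rfl fun j _ => ?_
          exact congrFun (congrFun hAB i) j
        linarith
    · intro T hT
      obtain ⟨That, h1, h2⟩ := hsurj T hT
      exact ⟨That, h1, h2⟩
  refine ⟨fun That h => obj_pres n m α M L That, ?_⟩
  have himg : objHat n m α M L '' TpolyHat n m = objPart n m α M L '' Tpartial n m := by
    ext x
    constructor
    · rintro ⟨That, hThat, rfl⟩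
      exact ⟨restrictCols n m That, (maps_to_aux n m That hThat).1,
        (obj_pres n m α M L That).symm⟩
    · rintro ⟨T, hT, rfl⟩
      obtain ⟨That, h1, h2⟩ := hsurj T ⟨hT, colsum_eq n m T hT⟩
      exact ⟨That, h1, by rw [obj_pres n m α M L That, h2]⟩
  rw [himg]
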